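/- Let d ≥ 1 and let A be a d×d real symmetric positive semidefinite matrix. Then (det A)^(1/d) = (1/d) · inf { tr(A·B) : B is a d×d real symmetric positive definite matrix with det B = 1 }. -/

import Mathlib

open Matrix

private lemma trace_eq_sum_eigs {d : ℕ} (A : Matrix (Fin d) (Fin d) ℝ)
    (hA : A.IsHermitian) : A.trace = ∑ i, hA.eigenvalues i := by
  simpa using hA.trace_eq_sum_eigenvalues

/-- AM–GM for PSD matrices: `d * (det M)^(1/d) ≤ trace M`. -/
private lemma amgm_psd {d : ℕ} (hd : 1 ≤ d) (M : Matrix (Fin d) (Fin d) ℝ)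
    (hM : M.PosSemidef) : (d : ℝ) * M.det ^ ((1 : ℝ) / d) ≤ M.trace := by
  have hd0 : (0 : ℝ) < d := by exact_mod_cast hd
  set μ := hM.1.eigenvalues with hμ
  have hpos : ∀ i, 0 ≤ μ i := fun i => hM.eigenvalues_nonneg i
  have hdet : M.det = ∏ i, μ i := by
    have := hM.1.det_eq_prod_eigenvalues
    simpa using this
  have htr : M.trace = ∑ i, μ i := trace_eq_sum_eigs M hM.1
  have key : (∏ i, μ i) ^ ((1 : ℝ) / d) ≤ ∑ i : Fin d, (1 / d : ℝ) * μ i := by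
    have := Real.geom_mean_le_arith_mean_weighted Finset.univ
      (fun _ => (1 / d : ℝ)) μ (fun i _ => by positivity) (by
        simp [Finset.sum_const, Finset.card_univ]
        field_simp) (fun i _ => hpos i)
    calc (∏ i, μ i) ^ ((1 : ℝ) / d) = ∏ i, (μ i) ^ ((1 : ℝ) / d) := by
          rw [← Real.finset_prod_rpow _ _ (fun i _ => hpos i)]
      _ ≤ ∑ i : Fin d, (1 / d : ℝ) * μ i := this
  have : M.det ^ ((1 : ℝ) / d) ≤ (1 / d : ℝ) * M.trace := by
    rw [hdet, htr, Finset.mul_sum]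
    exact key
  calc (d : ℝ) * M.det ^ ((1 : ℝ) / d) ≤ (d : ℝ) * ((1 / d : ℝ) * M.trace) := by
        exact mul_le_mul_of_nonneg_left this (le_of_lt hd0)
    _ = M.trace := by field_simp

private lemma posdef_smul {d : ℕ} {M : Matrix (Fin d) (Fin d) ℝ} (hM : M.PosDef)
    {c : ℝ} (hc : 0 < c) : (c • M).PosDef := by
  refine ⟨?_, fun x hx => ?_⟩
  · unfold Matrix.IsHermitian
    rw [conjTranspose_smul, hM.1.eq]
    simp
  · exact (hM.smul hc).2 hx

/-- **Concavity-of-determinant lemma, part (i).**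
Let `d ≥ 1` and let `A` be a `d×d` real symmetric positive semidefinite matrix. Then
`(det A)^(1/d) = (1/d) · inf { tr (A·B) : B symmetric positive definite, det B = 1 }`. -/
theorem det_rpow_inv_eq_inf_trace
    (d : ℕ) (hd : 1 ≤ d) (A : Matrix (Fin d) (Fin d) ℝ)
    (hA : A.PosSemidef) :
    A.det ^ ((1 : ℝ) / d) =
      (1 / d : ℝ) * sInf {t : ℝ | ∃ B : Matrix (Fin d) (Fin d) ℝ,
        B.PosDef ∧ B.det = 1 ∧ t = (A * B).trace} := by
  have hd0 : (0 : ℝ) < d := by exact_mod_cast hd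
  set S := {t : ℝ | ∃ B : Matrix (Fin d) (Fin d) ℝ,
    B.PosDef ∧ B.det = 1 ∧ t = (A * B).trace} with hS
  set c := A.det ^ ((1 : ℝ) / d) with hc
  -- Lower bound: every element of S is ≥ d * c.
  have hlow : ∀ t ∈ S, (d : ℝ) * c ≤ t := by
    rintro t ⟨B, hB, hBdet, rfl⟩
    obtain ⟨R, hRps, hRR⟩ : ∃ R : Matrix (Fin d) (Fin d) ℝ, R.PosSemidef ∧ R * R = B := by
      open scoped MatrixOrder in
      exact ⟨CFC.sqrt B, (CFC.sqrt_nonneg B).posSemidef, CFC.sqrt_mul_sqrt_self B hB.posSemidef.nonneg⟩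
    have hRH : Rᴴ = R := hRps.1.eq
    set M := R * A * R with hM
    have hMps : M.PosSemidef := by
      have := hA.mul_mul_conjTranspose_same R
      rwa [hRH] at this
    have hMtr : M.trace = (A * B).trace := by
      rw [hM, mul_assoc, trace_mul_comm, mul_assoc, hRR]
    have hMdet : M.det = A.det := by
      rw [hM, det_mul, det_mul, mul_comm, ← mul_assoc, ← det_mul, hRR, hBdet, one_mul]
    have := amgm_psd hd M hMps
    rw [hMdet, hMtr] at this
    exact this
  -- Upper bound construction: for each δ > 0.
  have hup : ∀ δ : ℝ, 0 < δ → ∃ t ∈ S, t ≤ (d : ℝ) * (A + δ • 1).det ^ ((1 : ℝ) / d) := by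
    intro δ hδ
    set Aδ := A + δ • (1 : Matrix (Fin d) (Fin d) ℝ) with hAδ
    have hAδpd : Aδ.PosDef := Matrix.PosDef.posSemidef_add hA (posdef_smul Matrix.PosDef.one hδ)
    have hdetpos : 0 < Aδ.det := hAδpd.det_pos
    set e := Aδ.det ^ ((1 : ℝ) / d) with he
    have hepos : 0 < e := Real.rpow_pos_of_pos hdetpos _
    set B := e • Aδ⁻¹ with hB
    have hBpd : B.PosDef := posdef_smul hAδpd.inv hepos
    have hunit : IsUnit Aδ.det := (ne_of_gt hdetpos).isUnit
    have hBdet : B.det = 1 := by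
      rw [hB, det_smul, det_nonsing_inv, Fintype.card_fin]
      rw [← Real.rpow_natCast e d, he, ← Real.rpow_mul (le_of_lt hdetpos)]
      have : (1 : ℝ) / d * d = 1 := by field_simp
      rw [this, Real.rpow_one]
      field_simp
      exact Ring.mul_inverse_cancel _ hunit
    refine ⟨(A * B).trace, ⟨B, hBpd, hBdet, rfl⟩, ?_⟩
    have htrAδ : (Aδ * B).trace = (d : ℝ) * e := by
      rw [hB, Matrix.mul_smul, trace_smul, Matrix.mul_nonsing_inv _ hunit, trace_one]
      simp [mul_comm]
    have hsplit : (Aδ * B).trace = (A * B).trace + δ * B.trace := by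
      rw [hAδ, add_mul, Matrix.smul_mul, one_mul, trace_add, trace_smul]
      simp
    have hBtr : 0 ≤ B.trace := by
      rw [trace_eq_sum_eigs B hBpd.1]
      exact Finset.sum_nonneg fun i _ => hBpd.posSemidef.eigenvalues_nonneg i
    have : (A * B).trace ≤ (Aδ * B).trace := by
      rw [hsplit]; nlinarith
    linarith
  -- S is nonempty and bounded below.
  have hne : S.Nonempty := by
    refine ⟨A.trace, 1, Matrix.PosDef.one, det_one, by simp⟩
  have hbdd : BddBelow S := ⟨(d : ℝ) * c, fun t ht => hlow t ht⟩
  -- sInf S ≥ d * c.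
  have h1 : (d : ℝ) * c ≤ sInf S := le_csInf hne hlow
  -- sInf S ≤ d * c via limit δ → 0⁺.
  have h2 : sInf S ≤ (d : ℝ) * c := by
    have hcont : ContinuousAt (fun δ : ℝ =>
        (d : ℝ) * (A + δ • 1).det ^ ((1 : ℝ) / d)) 0 := by
      apply ContinuousAt.mul continuousAt_const
      have hdet : Continuous fun δ : ℝ => (A + δ • (1 : Matrix (Fin d) (Fin d) ℝ)).det := by
        exact (continuous_const.add (continuous_id.smul continuous_const)).matrix_det
      have h0 : (A + (0:ℝ) • (1 : Matrix (Fin d) (Fin d) ℝ)).det = A.det := by simp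
      have := Real.continuousAt_rpow_const A.det ((1:ℝ)/d) (Or.inr (by positivity))
      exact ContinuousAt.comp (by rw [← h0] at this; exact this) hdet.continuousAt
    have htend : Filter.Tendsto (fun δ : ℝ =>
        (d : ℝ) * (A + δ • 1).det ^ ((1 : ℝ) / d)) (nhdsWithin 0 (Set.Ioi 0))
        (nhds ((d : ℝ) * c)) := by
      have : (fun δ : ℝ => (d : ℝ) * (A + δ • 1).det ^ ((1 : ℝ) / d)) 0 = (d : ℝ) * c := by
        simp [hc]
      rw [← this]
      exact hcont.continuousWithinAt.tendsto
    refine ge_of_tendsto htend ?_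
    filter_upwards [self_mem_nhdsWithin] with δ hδ
    obtain ⟨t, htS, hle⟩ := hup δ hδ
    exact le_trans (csInf_le hbdd htS) hle
  have : sInf S = (d : ℝ) * c := le_antisymm h2 h1
  rw [this]
  field_simp
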